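/- Calderón–Zygmund decomposition for general measures on a Lipschitz graph (part a): let Γ ⊂ ℝ^d be an n-dimensional Lipschitz graph, B ⊂ ℝ^d a ball, and μ := ℋ^n restricted to Γ ∩ B. For every finite complex Radon measure ν on ℝ^d with compact support and every λ > 2^{d+1}‖ν‖/‖μ‖, there exists a finite or countable family of cubes {Q_j} with bounded overlap (∑_j χ_{Q_j} ≤ C) and a function f ∈ L^1(μ) such that: (i) |ν|(Q_j) > 2^{−d−1} λ μ(2Q_j) for each j; (ii) |ν|(ηQ_j) ≤ 2^{−d−1} λ μ(2ηQ_j) for all η > 2; (iii) ν = f μ on ℝ^d \ Ω with |f| ≤ λ μ-a.e., where Ω := ∪_j Q_j. -/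

import Mathlib

open MeasureTheory Metric Set
open scoped NNReal ENNReal

/-- Projection onto the first `n` coordinates of `ℝ^{n+m}`. -/
noncomputable def piH (n m : ℕ) (x : EuclideanSpace ℝ (Fin (n + m))) :
    EuclideanSpace ℝ (Fin n) :=
  (WithLp.equiv 2 (Fin n → ℝ)).symm (fun i => x (Fin.castAdd m i))

/-- Projection onto the last `m` coordinates of `ℝ^{n+m}`. -/
noncomputable def piV (n m : ℕ) (x : EuclideanSpace ℝ (Fin (n + m))) :
    EuclideanSpace ℝ (Fin m) :=
  (WithLp.equiv 2 (Fin m → ℝ)).symm (fun i => x (Fin.natAdd n i))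

/-- The closed axis-parallel cube in `ℝ^{d'}` with center `c` and side length `l`. -/
def cube (d' : ℕ) (c : EuclideanSpace ℝ (Fin d')) (l : ℝ) : Set (EuclideanSpace ℝ (Fin d')) :=
  {y | ∀ i, |y i - c i| ≤ l / 2}

open Filter
open scoped Topology


lemma exists_pow_between {y : ℝ} (hy : 1 < y) : ∃ k : ℕ, (2:ℝ)^k < y ∧ y ≤ 2^(k+1) := by
  obtain ⟨B, hB⟩ := pow_unbounded_of_one_lt y (by norm_num : (1:ℝ) < 2)
  set P : ℕ → Prop := fun j => (2:ℝ)^j < y with hP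
  classical
  have hP0 : P 0 := by simpa [hP] using hy
  refine ⟨Nat.findGreatest P B, Nat.findGreatest_spec (Nat.zero_le B) hP0, ?_⟩
  by_cases h : Nat.findGreatest P B + 1 ≤ B
  · have := Nat.findGreatest_is_greatest (Nat.lt_succ_self _) h
    simpa [hP, not_lt] using this
  · have hkB : Nat.findGreatest P B = B := le_antisymm (Nat.findGreatest_le B) (by omega)
    have : y < (2:ℝ)^B := hB
    calc y ≤ (2:ℝ)^B := this.le
    _ ≤ 2^(Nat.findGreatest P B + 1) := by
        apply pow_le_pow_right₀ (by norm_num); omega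

/-- A finite measure with vanishing `d`-density at each point of `S` gives `S` measure zero. -/
lemma null_of_small_density {d : ℕ} (ξ : Measure (Fin d → ℝ)) [IsFiniteMeasure ξ]
    (S : Set (Fin d → ℝ))
    (hS : ∀ x ∈ S, ∀ ε : ℝ≥0, 0 < ε → ∀ᶠ t in 𝓝[>] (0:ℝ),
      ξ (closedBall x t) ≤ (ε : ℝ≥0∞) * volume (closedBall x t)) :
    ξ S = 0 := by
  have hcover : S ⊆ ⋃ R : ℕ, S ∩ ball 0 (R+1) := by
    intro x hx
    obtain ⟨R, hR⟩ := exists_nat_gt ‖x‖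
    exact mem_iUnion.2 ⟨R, hx, by simp [mem_ball, dist_zero_right]; linarith⟩
  refine measure_mono_null hcover (measure_iUnion_null fun R => ?_)
  set v := Besicovitch.vitaliFamily ξ
  have key : ∀ ε : ℝ≥0, 0 < ε → ξ (S ∩ ball 0 (R+1)) ≤ (ε : ℝ≥0∞) * volume (ball (0 : Fin d → ℝ) (R+1)) := by
    intro ε hε
    haveI : IsLocallyFiniteMeasure ((ε : ℝ≥0∞) • (volume : Measure (Fin d → ℝ))) := by
      constructor
      intro x
      refine ⟨ball x 1, ball_mem_nhds x one_pos, ?_⟩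
      simp only [Measure.smul_apply, smul_eq_mul]
      exact ENNReal.mul_lt_top ENNReal.coe_lt_top measure_ball_lt_top
    have hfr : ∀ x ∈ S ∩ ball 0 (R+1),
        ∃ᶠ a in v.filterAt x, ξ a ≤ ((ε : ℝ≥0∞) • (volume : Measure (Fin d → ℝ))) a := by
      intro x hx
      refine (Besicovitch.tendsto_filterAt ξ x).frequently ?_
      refine ((hS x hx.1 ε hε).and self_mem_nhdsWithin).frequently.mono ?_
      rintro t ⟨ht, -⟩
      simpa [Measure.smul_apply] using ht
    have := v.measure_le_of_frequently_le ((ε : ℝ≥0∞) • volume) Measure.AbsolutelyContinuous.rfl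
      (S ∩ ball 0 (R+1)) hfr
    refine this.trans ?_
    simp only [Measure.smul_apply, smul_eq_mul]
    exact mul_le_mul_right (measure_mono inter_subset_right) _
  set V := volume (ball (0 : Fin d → ℝ) (R+1)) with hV
  have hVfin : V ≠ ∞ := measure_ball_lt_top.ne
  by_contra h0
  have hpos : 0 < ξ (S ∩ ball 0 (R+1)) := pos_iff_ne_zero.2 h0
  -- choose ε small enough
  obtain ⟨ε, hεpos, hεlt⟩ : ∃ ε : ℝ≥0, 0 < ε ∧ (ε : ℝ≥0∞) * V < ξ (S ∩ ball 0 (R+1)) := by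
    rcases eq_or_ne V 0 with hV0 | hV0
    · exact ⟨1, one_pos, by simp [hV0, hpos]⟩
    · obtain ⟨ε', hε'⟩ := ENNReal.exists_nnreal_pos_mul_lt hVfin h0
      exact ⟨ε', hε'.1, by simpa [mul_comm] using hε'.2⟩
  exact absurd (key ε hεpos) (not_le.2 hεlt)


section
variable {d : ℕ}

/-- The key comparison: if `σ' Q ≤ c · μ' (2Q)` for all balls centered in `S`, then
`σ'` restricted to `S` is dominated by `2^(d+1) c · μ'`. -/
lemma comparison_lemma (σ' μ' : Measure (Fin d → ℝ)) [IsFiniteMeasure σ'] [IsFiniteMeasure μ']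
    (c : ℝ≥0∞) (hc : c ≠ ∞) (S : Set (Fin d → ℝ))
    (hS : ∀ x ∈ S, ∀ t : ℝ, 0 < t → σ' (closedBall x t) ≤ c * μ' (closedBall x (2*t)))
    (T : Set (Fin d → ℝ)) :
    σ' (T ∩ S) ≤ 2^(d+1) * c * μ' T := by
  classical
  set G : Set (Fin d → ℝ) := {x | ∀ δ : ℝ, 0 < δ → ∃ t, 0 < t ∧ t < δ ∧
    μ' (closedBall x (2*t)) ≤ 2^(d+1) * μ' (closedBall x t)} with hG
  -- Step 1: σ' (S \ G) = 0
  have step1 : σ' (S \ G) = 0 := by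
    apply null_of_small_density σ' (S \ G)
    rintro x ⟨hxS, hxG⟩ ε hε
    -- non-doubling at all small scales
    simp only [hG, mem_setOf_eq, not_forall] at hxG
    obtain ⟨δ, hδpos, hδ⟩ := hxG
    have hnd : ∀ t : ℝ, 0 < t → t < δ →
        2^(d+1) * μ' (closedBall x t) < μ' (closedBall x (2*t)) := by
      intro t ht htδ
      by_contra hcon
      exact hδ ⟨t, ht, htδ, not_lt.1 hcon⟩
    -- claim A
    have claimA : ∀ k : ℕ, ∀ t : ℝ, 0 < t → 2^k * t < δ →
        2^((d+1)*k) * μ' (closedBall x t) ≤ μ' univ := by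
      intro k
      induction k with
      | zero => intro t _ _; simpa using measure_mono (subset_univ _)
      | succ k ih =>
        intro t ht hlt
        have h2 : (2:ℝ)^(k+1) ≥ 1 := one_le_pow₀ (by norm_num)
        have htδ : t < δ := lt_of_le_of_lt (le_mul_of_one_le_left ht.le h2) hlt
        have hdb := (hnd t ht htδ).le
        have h2t : 2^k * (2*t) < δ := by rw [← mul_assoc]; rw [pow_succ] at hlt; linarith [hlt]
        have := ih (2*t) (by linarith) h2t
        calc 2^((d+1)*(k+1)) * μ' (closedBall x t)
            = 2^((d+1)*k) * (2^(d+1) * μ' (closedBall x t)) := by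
              rw [← mul_assoc, ← pow_add]; ring_nf
          _ ≤ 2^((d+1)*k) * μ' (closedBall x (2*t)) := mul_le_mul_right hdb _
          _ ≤ μ' univ := this
    -- density estimate
    have hbound : ∀ t : ℝ, 0 < t → 2*t < δ →
        σ' (closedBall x t) ≤ (c * μ' univ * ENNReal.ofReal (4/δ)^(d+1)) * ENNReal.ofReal t ^ (d+1) := by
      intro t ht h2t
      have hy : 1 < δ/(2*t) := (one_lt_div (by linarith)).2 h2t
      obtain ⟨k, hk1, hk2⟩ := exists_pow_between hy
      have hklt : 2^k * (2*t) < δ := by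
        rw [lt_div_iff₀ (by linarith)] at hk1; linarith [hk1]
      have hA := claimA k (2*t) (by linarith) hklt
      have hμ2t : μ' (closedBall x (2*t)) ≤ μ' univ / 2^((d+1)*k) := by
        rw [ENNReal.le_div_iff_mul_le (Or.inl (by positivity)) (Or.inl (by simp))]
        rw [mul_comm]; exact hA
      have h2k : (1:ℝ≥0∞) / 2^((d+1)*k) ≤ ENNReal.ofReal (4*t/δ) ^ (d+1) := by
        have hreal : (1:ℝ) / 2^k ≤ 4*t/δ := by
          have hδle : δ ≤ 2^(k+1) * (2*t) := (div_le_iff₀ (by linarith)).1 hk2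
          rw [div_le_div_iff₀ (by positivity) hδpos]
          calc (1:ℝ) * δ = δ := one_mul δ
            _ ≤ 2^(k+1) * (2*t) := hδle
            _ = 4*t*2^k := by ring
        calc (1:ℝ≥0∞) / 2^((d+1)*k) = ((1:ℝ≥0∞) / 2^k)^(d+1) := by
              rw [one_div, one_div, mul_comm (d+1) k, pow_mul, ← ENNReal.inv_pow]
          _ ≤ ENNReal.ofReal (4*t/δ) ^ (d+1) := by
              gcongr
              have : (1:ℝ≥0∞) / 2^k = ENNReal.ofReal ((1:ℝ)/2^k) := by
                rw [ENNReal.ofReal_div_of_pos (by positivity), ENNReal.ofReal_one,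
                  ENNReal.ofReal_pow (by norm_num)]
                norm_num
              rw [this]
              exact ENNReal.ofReal_le_ofReal hreal
      calc σ' (closedBall x t) ≤ c * μ' (closedBall x (2*t)) := hS x hxS t ht
        _ ≤ c * (μ' univ / 2^((d+1)*k)) := mul_le_mul_right hμ2t _
        _ = c * μ' univ * ((1:ℝ≥0∞) / 2^((d+1)*k)) := by
            simp only [div_eq_mul_inv, one_mul, one_div]
            ring
        _ ≤ c * μ' univ * (ENNReal.ofReal (4*t/δ)) ^ (d+1) := mul_le_mul_right h2k _
        _ = (c * μ' univ * ENNReal.ofReal (4/δ)^(d+1)) * ENNReal.ofReal t ^ (d+1) := by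
            have h4 : ENNReal.ofReal (4*t/δ) = ENNReal.ofReal (4/δ) * ENNReal.ofReal t := by
              rw [← ENNReal.ofReal_mul (by positivity)]
              congr 1
              ring
            rw [h4, mul_pow]
            ring
    -- now convert to ε * volume bound
    set K := c * μ' univ * ENNReal.ofReal (4/δ)^(d+1) with hK
    have hKfin : K ≠ ∞ := by
      refine ENNReal.mul_ne_top (ENNReal.mul_ne_top hc (measure_ne_top _ _)) ?_
      exact (ENNReal.pow_ne_top ENNReal.ofReal_ne_top)
    have hvol : ∀ t : ℝ, 0 < t →
        volume (closedBall x t) = ENNReal.ofReal (2*t) ^ d := by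
      intro t ht
      rw [closedBall_pi _ ht.le, volume_pi_pi]
      simp [Real.volume_closedBall, two_mul, Finset.prod_const]
    have htend : Tendsto (fun t : ℝ => K * ENNReal.ofReal t) (𝓝[>] 0) (𝓝 0) := by
      have h1 : Tendsto (fun t : ℝ => ENNReal.ofReal t) (𝓝[>] 0) (𝓝 0) := by
        have := (ENNReal.continuous_ofReal.tendsto 0).mono_left
          (nhdsWithin_le_nhds : 𝓝[>] (0:ℝ) ≤ 𝓝 0)
        simpa using this
      have := ENNReal.Tendsto.const_mul h1 (Or.inr hKfin)
      simpa using this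
    have hev : ∀ᶠ t in 𝓝[>] (0:ℝ), K * ENNReal.ofReal t ≤ (ε : ℝ≥0∞) * ENNReal.ofReal 2 ^ d := by
      have hpos : (0:ℝ≥0∞) < (ε : ℝ≥0∞) * ENNReal.ofReal 2 ^ d := by
        apply ENNReal.mul_pos (by exact_mod_cast hε.ne') (by positivity)
      exact (htend.eventually_lt_const hpos).mono fun t ht => ht.le
    have hsmall : ∀ᶠ t in 𝓝[>] (0:ℝ), t < δ/2 ∧ 0 < t :=
      eventually_nhdsWithin_of_eventually_nhds (eventually_lt_nhds (by linarith)) |>.and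
        self_mem_nhdsWithin
    filter_upwards [hev, hsmall] with t h1 ⟨h2, h3⟩
    have := hbound t h3 (by linarith)
    refine this.trans ?_
    rw [hvol t h3]
    have hsplit : ENNReal.ofReal t ^ (d+1) = ENNReal.ofReal t * ENNReal.ofReal t ^ d := by
      rw [pow_succ]; ring
    rw [hsplit, ← mul_assoc]
    have h2t : ENNReal.ofReal (2*t) ^ d = ENNReal.ofReal 2 ^ d * ENNReal.ofReal t ^ d := by
      rw [← mul_pow, ← ENNReal.ofReal_mul (by norm_num)]
    rw [h2t, ← mul_assoc]
    exact mul_le_mul_left (h1.trans_eq rfl) _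
  -- Step 2
  set ν := (2^(d+1) * c) • μ' with hν
  haveI : IsFiniteMeasure ν := by
    constructor
    rw [hν, Measure.smul_apply, smul_eq_mul]
    exact ENNReal.mul_lt_top (ENNReal.mul_lt_top (ENNReal.pow_lt_top (by norm_num)) hc.lt_top) (measure_lt_top _ _)
  have step2 : σ' (T ∩ S ∩ G) ≤ ν (T ∩ S ∩ G) := by
    set v := Besicovitch.vitaliFamily σ'
    refine v.measure_le_of_frequently_le ν Measure.AbsolutelyContinuous.rfl _ ?_
    rintro x ⟨⟨hxT, hxS⟩, hxG⟩
    refine (Besicovitch.tendsto_filterAt σ' x).frequently ?_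
    rw [(nhdsGT_basis (0:ℝ)).frequently_iff]
    intro δ hδ
    obtain ⟨t, ht, htδ, hdb⟩ := hxG δ hδ
    refine ⟨t, ⟨ht, htδ⟩, ?_⟩
    calc σ' (closedBall x t) ≤ c * μ' (closedBall x (2*t)) := hS x hxS t ht
      _ ≤ c * (2^(d+1) * μ' (closedBall x t)) := mul_le_mul_right hdb _
      _ = ν (closedBall x t) := by
          simp only [hν, Measure.smul_apply, smul_eq_mul]; ring
  calc σ' (T ∩ S) ≤ σ' ((T ∩ S ∩ G) ∪ (S \ G)) := by
        apply measure_mono; intro x hx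
        by_cases hxG : x ∈ G
        · exact Or.inl ⟨hx, hxG⟩
        · exact Or.inr ⟨hx.2, hxG⟩
    _ ≤ σ' (T ∩ S ∩ G) + σ' (S \ G) := measure_union_le _ _
    _ = σ' (T ∩ S ∩ G) := by rw [step1, add_zero]
    _ ≤ ν (T ∩ S ∩ G) := step2
    _ ≤ ν T := measure_mono (inter_subset_left.trans inter_subset_left)
    _ = 2^(d+1) * c * μ' T := by simp [hν]

end

lemma cube_eq_preimage {d' : ℕ} (c : EuclideanSpace ℝ (Fin d')) {l : ℝ} (hl : 0 ≤ l) :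
    cube d' c l = ((MeasurableEquiv.toLp 2 (Fin d' → ℝ)).symm) ⁻¹'
      (closedBall (((MeasurableEquiv.toLp 2 (Fin d' → ℝ)).symm) c) (l/2)) := by
  ext y
  simp only [cube, mem_setOf_eq, mem_preimage, MeasurableEquiv.coe_toLp_symm,
    mem_closedBall, dist_pi_le_iff (by linarith : (0:ℝ) ≤ l/2), Real.dist_eq]

lemma lipschitz_piH (n m : ℕ) : LipschitzWith 1 (piH n m) := by
  apply LipschitzWith.of_dist_le_mul
  intro x y
  rw [NNReal.coe_one, one_mul, EuclideanSpace.dist_eq, EuclideanSpace.dist_eq]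
  apply Real.sqrt_le_sqrt
  calc ∑ i : Fin n, dist (piH n m x i) (piH n m y i)^2
      = ∑ i : Fin n, dist (x (Fin.castAdd m i)) (y (Fin.castAdd m i))^2 := rfl
    _ ≤ ∑ i : Fin n, dist (x (Fin.castAdd m i)) (y (Fin.castAdd m i))^2
        + ∑ i : Fin m, dist (x (Fin.natAdd n i)) (y (Fin.natAdd n i))^2 :=
        le_add_of_nonneg_right (Finset.sum_nonneg fun i _ => sq_nonneg _)
    _ = ∑ j : Fin (n+m), dist (x j) (y j)^2 :=
        (Fin.sum_univ_add (fun j => dist (x j) (y j)^2)).symm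

section graph
variable (n m : ℕ) (A : EuclideanSpace ℝ (Fin n) → EuclideanSpace ℝ (Fin m)) {L : ℝ≥0}

noncomputable def graphMap (u : EuclideanSpace ℝ (Fin n)) : EuclideanSpace ℝ (Fin (n + m)) :=
  (WithLp.equiv 2 (Fin (n+m) → ℝ)).symm
    (Fin.append ((WithLp.equiv 2 (Fin n → ℝ)) u) ((WithLp.equiv 2 (Fin m → ℝ)) (A u)))

lemma graphMap_apply_castAdd (u : EuclideanSpace ℝ (Fin n)) (i : Fin n) :
    graphMap n m A u (Fin.castAdd m i) = u i := by
  show Fin.append _ _ (Fin.castAdd m i) = u i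
  rw [Fin.append_left, WithLp.equiv_apply]

lemma graphMap_apply_natAdd (u : EuclideanSpace ℝ (Fin n)) (i : Fin m) :
    graphMap n m A u (Fin.natAdd n i) = A u i := by
  show Fin.append _ _ (Fin.natAdd n i) = A u i
  rw [Fin.append_right, WithLp.equiv_apply]

lemma graphMap_lipschitz (hA : LipschitzWith L A) :
    LipschitzWith (NNReal.sqrt (1 + L^2)) (graphMap n m A) := by
  apply LipschitzWith.of_dist_le_mul
  intro u v
  have key : dist (graphMap n m A u) (graphMap n m A v)^2
      = dist u v^2 + dist (A u) (A v)^2 := by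
    rw [EuclideanSpace.dist_eq, EuclideanSpace.dist_eq, EuclideanSpace.dist_eq,
      Real.sq_sqrt (Finset.sum_nonneg fun j _ => sq_nonneg _),
      Real.sq_sqrt (Finset.sum_nonneg fun j _ => sq_nonneg _),
      Real.sq_sqrt (Finset.sum_nonneg fun j _ => sq_nonneg _),
      Fin.sum_univ_add (f := fun j : Fin (n+m) =>
        dist (graphMap n m A u j) (graphMap n m A v j)^2)]
    congr 1
    · exact Finset.sum_congr rfl fun i _ => by
        rw [graphMap_apply_castAdd, graphMap_apply_castAdd]
    · exact Finset.sum_congr rfl fun i _ => by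
        rw [graphMap_apply_natAdd, graphMap_apply_natAdd]
  have hL : dist (A u) (A v) ≤ (L:ℝ) * dist u v := hA.dist_le_mul u v
  have h2 : dist (graphMap n m A u) (graphMap n m A v)^2 ≤ (1+(L:ℝ)^2) * dist u v^2 := by
    rw [key]
    nlinarith [dist_nonneg (x := u) (y := v), dist_nonneg (x := A u) (y := A v)]
  calc dist (graphMap n m A u) (graphMap n m A v)
      = Real.sqrt (dist (graphMap n m A u) (graphMap n m A v)^2) :=
        (Real.sqrt_sq dist_nonneg).symm
    _ ≤ Real.sqrt ((1+(L:ℝ)^2) * dist u v^2) := Real.sqrt_le_sqrt h2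
    _ = Real.sqrt (1+(L:ℝ)^2) * dist u v := by
        rw [Real.sqrt_mul (by positivity), Real.sqrt_sq dist_nonneg]
    _ = (NNReal.sqrt (1 + L^2) : ℝ) * dist u v := by
        rw [Real.coe_sqrt]
        push_cast
        ring_nf

lemma graphMap_piH {x : EuclideanSpace ℝ (Fin (n+m))} (hx : piV n m x = A (piH n m x)) :
    graphMap n m A (piH n m x) = x := by
  ext j
  refine Fin.addCases (fun i => ?_) (fun i => ?_) j
  · rw [graphMap_apply_castAdd]; rfl
  · rw [graphMap_apply_natAdd, ← hx]; rfl

/-- Finiteness of the graph measure. -/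
lemma graph_finite (hA : LipschitzWith L A) (x₀ : EuclideanSpace ℝ (Fin (n + m))) (r : ℝ) :
    μH[n] ({x : EuclideanSpace ℝ (Fin (n + m)) | piV n m x = A (piH n m x)}
      ∩ closedBall x₀ r) < ∞ := by
  set Γ := {x : EuclideanSpace ℝ (Fin (n + m)) | piV n m x = A (piH n m x)}
  have hsub : Γ ∩ closedBall x₀ r ⊆ graphMap n m A '' (closedBall (piH n m x₀) r) := by
    rintro x ⟨hxΓ, hxB⟩
    exact ⟨piH n m x, by
      simpa [dist_comm] using (lipschitz_piH n m).dist_le_mul x x₀ |>.trans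
        (by simpa using hxB), graphMap_piH n m A hxΓ⟩
  have h1 : μH[n] (Γ ∩ closedBall x₀ r)
      ≤ (NNReal.sqrt (1 + L^2) : ℝ≥0∞)^(n:ℝ) * μH[n] (closedBall (piH n m x₀) r) :=
    le_trans (measure_mono hsub)
      ((graphMap_lipschitz n m A hA).hausdorffMeasure_image_le (by positivity) _)
  -- now bound the Hausdorff measure of a closed ball in `EuclideanSpace ℝ (Fin n)`
  have h2 : μH[n] (closedBall (piH n m x₀) r) < ∞ := by
    set en := WithLp.equiv 2 (Fin n → ℝ)
    have hlip : LipschitzWith ((Fintype.card (Fin n) : ℝ≥0) ^ ((1:ℝ≥0∞)/2).toReal) en.symm :=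
      (PiLp.antilipschitzWith_ofLp 2 (fun _ : Fin n => ℝ)).to_rightInverse en.apply_symm_apply
    have himg : closedBall (piH n m x₀) r = en.symm '' (en '' closedBall (piH n m x₀) r) := by
      rw [Equiv.symm_image_image]
    have hb : Bornology.IsBounded (en '' closedBall (piH n m x₀) r) :=
      ((PiLp.lipschitzWith_ofLp 2 (fun _ : Fin n => ℝ)).isBounded_image)
        isBounded_closedBall
    obtain ⟨R', hR'⟩ := hb.subset_closedBall 0
    have hpi : (μH[n] : Measure (Fin n → ℝ)) = volume := by
      simpa using (hausdorffMeasure_pi_real (ι := Fin n))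
    calc μH[n] (closedBall (piH n m x₀) r)
        ≤ (((Fintype.card (Fin n) : ℝ≥0) ^ ((1:ℝ≥0∞)/2).toReal : ℝ≥0) : ℝ≥0∞)^(n:ℝ)
          * μH[n] (en '' closedBall (piH n m x₀) r) := by
          nth_rewrite 1 [himg]
          exact hlip.hausdorffMeasure_image_le (by positivity) _
      _ ≤ _ * μH[n] (closedBall (0 : Fin n → ℝ) R') :=
          mul_le_mul_right (measure_mono hR') _
      _ < ∞ := by
          rw [hpi]
          exact ENNReal.mul_lt_top (by
            apply ENNReal.rpow_lt_top_of_nonneg (by positivity)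
            exact ENNReal.coe_ne_top) measure_closedBall_lt_top
  calc μH[n] (Γ ∩ closedBall x₀ r) ≤ _ := h1
    _ < ∞ := ENNReal.mul_lt_top (by
        apply ENNReal.rpow_lt_top_of_nonneg (by positivity)
        exact ENNReal.coe_ne_top) h2

end graph

/-- Calderón–Zygmund decomposition, part (a): with `μ := ℋ^n` restricted to
`Γ ∩ B` for a Lipschitz graph `Γ ⊂ ℝ^d` (`d = n + m`) and a ball `B`, and a compactly
supported finite complex Radon measure `ν` (encoded by its polar decomposition `ν = g·σ`
with `σ = |ν|` a finite measure and `‖g‖ = 1` `σ`-a.e.), for every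
`λ > 2^{d+1}‖ν‖/‖μ‖` there are cubes `{Q_j}` with bounded overlap and `f ∈ L¹(μ)` with:
(i) `|ν|(Q_j) > 2^{−d−1} λ μ(2Q_j)`; (ii) `|ν|(ηQ_j) ≤ 2^{−d−1} λ μ(2ηQ_j)` for `η > 2`;
(iii) `ν = f μ` outside `Ω := ⋃ Q_j` and `|f| ≤ λ` `μ`-a.e. -/
theorem stmt8 (n m : ℕ) (hn : 1 ≤ n) (hm : 1 ≤ m)
    (A : EuclideanSpace ℝ (Fin n) → EuclideanSpace ℝ (Fin m)) (L : ℝ≥0)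
    (hA : LipschitzWith L A)
    (x₀ : EuclideanSpace ℝ (Fin (n + m))) (r : ℝ) (hr : 0 < r)
    (μ : Measure (EuclideanSpace ℝ (Fin (n + m))))
    (hμ : μ = (μH[n]).restrict
      ({x | piV n m x = A (piH n m x)} ∩ closedBall x₀ r))
    (σ : Measure (EuclideanSpace ℝ (Fin (n + m)))) (hσfin : IsFiniteMeasure σ)
    (g : EuclideanSpace ℝ (Fin (n + m)) → ℂ) (hgm : Measurable g)
    (hg : ∀ᵐ y ∂σ, ‖g y‖ = 1)
    (hsupp : ∃ Kc : Set (EuclideanSpace ℝ (Fin (n + m))), IsCompact Kc ∧ σ Kcᶜ = 0)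
    (lam : ℝ)
    (hlam : (2 : ℝ≥0∞) ^ (n + m + 1) * σ univ < ENNReal.ofReal lam * μ univ) :
    ∃ C : ℝ≥0∞, C ≠ ⊤ ∧
      ∃ (ι : Type) (_ : Countable ι)
        (c : ι → EuclideanSpace ℝ (Fin (n + m))) (l : ι → ℝ)
        (f : EuclideanSpace ℝ (Fin (n + m)) → ℂ),
      (∀ j, 0 < l j) ∧
      (∀ x, ∑' j : ι, (cube (n + m) (c j) (l j)).indicator (fun _ => (1 : ℝ≥0∞)) x ≤ C) ∧
      Integrable f μ ∧
      (∀ j, ENNReal.ofReal (lam / 2 ^ (n + m + 1)) * μ (cube (n + m) (c j) (2 * l j))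
          < σ (cube (n + m) (c j) (l j))) ∧
      (∀ j, ∀ η : ℝ, 2 < η →
        σ (cube (n + m) (c j) (η * l j))
          ≤ ENNReal.ofReal (lam / 2 ^ (n + m + 1)) * μ (cube (n + m) (c j) (2 * η * l j))) ∧
      (∀ᵐ x ∂μ, ‖f x‖ ≤ lam) ∧
      (∀ s : Set (EuclideanSpace ℝ (Fin (n + m))), MeasurableSet s →
        s ⊆ (⋃ j, cube (n + m) (c j) (l j))ᶜ →
        ∫ y in s, g y ∂σ = ∫ y in s, f y ∂μ) := by
  classical
  obtain ⟨Kc, hKcomp, hKnull⟩ := hsupp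
  -- positivity of lam
  have hlam0 : 0 < lam := by
    by_contra h
    push_neg at h
    rw [ENNReal.ofReal_eq_zero.2 h, zero_mul] at hlam
    exact absurd hlam (by simp)
  -- μ is a finite measure
  haveI hμfin : IsFiniteMeasure μ := by
    constructor
    rw [hμ, Measure.restrict_apply MeasurableSet.univ, univ_inter]
    exact graph_finite n m A hA x₀ r
  set e := (MeasurableEquiv.toLp 2 (Fin (n+m) → ℝ)).symm with he
  have econt : Continuous (⇑e) := by
    rw [MeasurableEquiv.coe_toLp_symm]
    exact (PiLp.lipschitzWith_ofLp 2 _).continuous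
  have elip : LipschitzWith 1 (⇑e) := by
    rw [MeasurableEquiv.coe_toLp_symm]
    exact PiLp.lipschitzWith_ofLp 2 _
  set σ' := Measure.map e σ with hσ'
  set μ' := Measure.map e μ with hμ'
  haveI : IsFiniteMeasure σ' := by
    constructor
    rw [hσ', Measure.map_apply e.measurable MeasurableSet.univ, preimage_univ]
    exact measure_lt_top σ _
  haveI : IsFiniteMeasure μ' := by
    constructor
    rw [hμ', Measure.map_apply e.measurable MeasurableSet.univ, preimage_univ]
    exact measure_lt_top μ _
  set ρ₀ := ENNReal.ofReal (lam / 2 ^ (n + m + 1)) with hρ₀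
  have hofdiv : ρ₀ = ENNReal.ofReal lam / 2^(n+m+1) := by
    rw [hρ₀, ENNReal.ofReal_div_of_pos (by positivity)]
    congr 1
    rw [ENNReal.ofReal_pow (by norm_num)]
    norm_num
  have hκ : (2:ℝ≥0∞)^(n+m+1) * ρ₀ = ENNReal.ofReal lam := by
    rw [hofdiv, ENNReal.mul_div_cancel (by positivity) (by simp)]
  -- key global inequality
  have hkey : σ' univ ≤ ρ₀ * μ' univ := by
    have h1 : σ' univ = σ univ := by
      rw [hσ', Measure.map_apply e.measurable MeasurableSet.univ, preimage_univ]
    have h2 : μ' univ = μ univ := by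
      rw [hμ', Measure.map_apply e.measurable MeasurableSet.univ, preimage_univ]
    rw [h1, h2, hofdiv]
    have : ENNReal.ofReal lam / 2^(n+m+1) * μ univ = ENNReal.ofReal lam * μ univ / 2^(n+m+1) := by
      simp only [div_eq_mul_inv]
      ring
    rw [this, ENNReal.le_div_iff_mul_le (Or.inl (by positivity)) (Or.inl (by simp))]
    rw [mul_comm]
    exact hlam.le
  -- concentration of σ' and μ'
  have hK'null : σ' ((⇑e '' Kc)ᶜ) = 0 := by
    rw [hσ', Measure.map_apply e.measurable (((hKcomp.image econt).isClosed).measurableSet.compl)]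
    rw [preimage_compl]
    have himg : ⇑e ⁻¹' (⇑e '' Kc) = Kc := preimage_image_eq Kc e.injective
    rw [himg]
    exact hKnull
  obtain ⟨R₂, hR₂⟩ := (hKcomp.image econt).isBounded.subset_closedBall (e x₀)
  have hB'null : μ' ((closedBall (e x₀) r)ᶜ) = 0 := by
    rw [hμ', Measure.map_apply e.measurable measurableSet_closedBall.compl]
    have hsub : ⇑e ⁻¹' (closedBall (e x₀) r)ᶜ ⊆ (closedBall x₀ r)ᶜ := by
      intro y hy hyB
      exact hy (by simpa using (elip.dist_le_mul y x₀).trans (by simpa using hyB))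
    refine measure_mono_null hsub ?_
    rw [hμ, Measure.restrict_apply measurableSet_closedBall.compl]
    convert measure_empty
    · ext y; simp only [mem_inter_iff, mem_compl_iff, mem_empty_iff_false, iff_false]
      rintro ⟨h1, -, h2⟩; exact h1 h2
    · infer_instance
  set E' := {x : Fin (n+m) → ℝ |
    ∃ t, 0 < t ∧ ρ₀ * μ' (closedBall x (2*t)) < σ' (closedBall x t)} with hE'
  set M := r + (max R₂ 0) + 1 with hM
  have hbad_bound : ∀ x : Fin (n+m) → ℝ, ∀ t : ℝ, 0 < t →
      ρ₀ * μ' (closedBall x (2*t)) < σ' (closedBall x t) → t < M := by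
    intro x t ht hbad
    by_contra hge
    push_neg at hge  -- M ≤ t
    obtain ⟨k, hk, hkt⟩ : ∃ k ∈ ⇑e '' Kc, k ∈ closedBall x t := by
      by_contra hno
      push_neg at hno
      have h0 : σ' (closedBall x t) = 0 := by
        refine measure_mono_null (fun y hy => ?_) hK'null
        exact fun hyK => hno y hyK hy
      rw [h0] at hbad
      exact absurd hbad (by simp)
    have hsub : closedBall (e x₀) r ⊆ closedBall x (2*t) := by
      intro w hw
      have h1 : dist w x ≤ dist w (e x₀) + dist (e x₀) k + dist k x := dist_triangle4 w (e x₀) k x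
      have h2 : dist w (e x₀) ≤ r := hw
      have h3 : dist (e x₀) k ≤ max R₂ 0 := by
        rw [dist_comm]
        exact (hR₂ hk).trans (le_max_left _ _)
      have h4 : dist k x ≤ t := hkt
      have : dist w x ≤ r + max R₂ 0 + t := by linarith
      rw [mem_closedBall]
      rw [hM] at hge
      linarith
    have hμfull : μ' univ ≤ μ' (closedBall x (2*t)) := by
      calc μ' univ ≤ μ' (closedBall x (2*t) ∪ (closedBall (e x₀) r)ᶜ) := by
            apply measure_mono
            intro y _
            by_cases hy : y ∈ closedBall (e x₀) r
            · exact Or.inl (hsub hy)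
            · exact Or.inr hy
        _ ≤ μ' (closedBall x (2*t)) + μ' ((closedBall (e x₀) r)ᶜ) := measure_union_le _ _
        _ = μ' (closedBall x (2*t)) := by rw [hB'null, add_zero]
    have : σ' (closedBall x t) ≤ ρ₀ * μ' (closedBall x (2*t)) :=
      (measure_mono (subset_univ _)).trans (hkey.trans (mul_le_mul_right hμfull _))
    exact absurd hbad (not_lt.2 this)
  have hMpos : 0 < M := by rw [hM]; positivity
  -- selection of good radii
  have hsel : ∀ x : ↥E', ∃ t : ℝ, 0 < t ∧ t ≤ M ∧
      (ρ₀ * μ' (closedBall (x : Fin (n+m) → ℝ) (2*t)) < σ' (closedBall (x : Fin (n+m) → ℝ) t)) ∧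
      ∀ η : ℝ, 2 < η → σ' (closedBall (x : Fin (n+m) → ℝ) (η*t))
        ≤ ρ₀ * μ' (closedBall (x : Fin (n+m) → ℝ) (2*(η*t))) := by
    rintro ⟨x, hx⟩
    obtain ⟨t₁, ht₁, hbad₁⟩ := hx
    set Bx := {t : ℝ | 0 < t ∧ ρ₀ * μ' (closedBall x (2*t)) < σ' (closedBall x t)} with hBx
    have hne : t₁ ∈ Bx := ⟨ht₁, hbad₁⟩
    have hbdd : BddAbove Bx := ⟨M, fun t ht => (hbad_bound x t ht.1 ht.2).le⟩
    have ht₀pos : 0 < sSup Bx := lt_of_lt_of_le ht₁ (le_csSup hbdd hne)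
    obtain ⟨t, htmem, htgt⟩ := exists_lt_of_lt_csSup ⟨t₁, hne⟩ (by linarith : sSup Bx / 2 < sSup Bx)
    refine ⟨t, htmem.1, (hbad_bound x t htmem.1 htmem.2).le, htmem.2, ?_⟩
    intro η hη
    have hηt : sSup Bx < η * t := by nlinarith [htmem.1]
    have hnotmem : η * t ∉ Bx := fun hmem => absurd (le_csSup hbdd hmem) (not_le.2 hηt)
    have hηtpos : 0 < η * t := by nlinarith [htmem.1]
    rw [hBx, mem_setOf_eq, not_and, not_lt] at hnotmem
    exact hnotmem hηtpos
  choose rad hrad0 hradM hradlt hradeta using hsel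
  -- Besicovitch covering
  obtain ⟨N, τ, hτ, hSC⟩ := HasBesicovitchCovering.no_satelliteConfig (α := Fin (n+m) → ℝ)
  set q : Besicovitch.BallPackage ↥E' (Fin (n+m) → ℝ) :=
    { c := fun x => (x : Fin (n+m) → ℝ), r := rad, rpos := hrad0, r_bound := M,
      r_le := hradM } with hq
  obtain ⟨sfam, hdisj, hcov⟩ := Besicovitch.exist_disjoint_covering_families hτ hSC q
  have hcount : ∀ i, (sfam i).Countable := by
    intro i
    apply (hdisj i).countable_of_nonempty_interior
    intro j _
    rw [interior_closedBall _ (hrad0 j).ne']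
    exact nonempty_ball.2 (hrad0 j)
  haveI hcnt : ∀ i, Countable ↥(sfam i) := fun i => (hcount i).to_subtype
  -- the Calderon-Zygmund part for the complement
  have hEc : ∀ x ∈ E'ᶜ, ∀ t : ℝ, 0 < t →
      σ' (closedBall x t) ≤ ρ₀ * μ' (closedBall x (2*t)) := by
    intro x hx t ht
    by_contra h
    exact hx ⟨t, ht, not_le.1 h⟩
  have hcomp := comparison_lemma σ' μ' ρ₀ ENNReal.ofReal_ne_top E'ᶜ hEc
  set κ := ENNReal.ofReal lam with hκdef
  have hκ0 : κ ≠ 0 := by simp [hκdef, hlam0, not_le.2 hlam0]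
  have hκtop : κ ≠ ⊤ := ENNReal.ofReal_ne_top
  set τ' := σ'.restrict E'ᶜ with hτdef
  haveI : τ'.HaveLebesgueDecomposition μ' := Measure.haveLebesgueDecomposition_of_sigmaFinite τ' μ'
  have hτle : τ' ≤ κ • μ' := by
    rw [Measure.le_iff]
    intro T hT
    rw [hτdef, Measure.restrict_apply hT, Measure.smul_apply, smul_eq_mul]
    calc σ' (T ∩ E'ᶜ) ≤ 2^(n+m+1) * ρ₀ * μ' T := hcomp T
      _ = κ * μ' T := by rw [hκ]
  haveI : IsFiniteMeasure (κ • μ') := by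
    constructor
    rw [Measure.smul_apply, smul_eq_mul]
    exact ENNReal.mul_lt_top hκtop.lt_top (measure_lt_top _ _)
  have hac : τ' ≪ μ' := by
    refine Measure.AbsolutelyContinuous.mk (fun Z hZm hZ0 => ?_)
    have := Measure.le_iff.1 hτle Z hZm
    rw [Measure.smul_apply, smul_eq_mul, hZ0, mul_zero] at this
    exact le_antisymm this zero_le
  have h1 : τ'.rnDeriv (κ • μ') ≤ᵐ[μ'] 1 := by
    have := Measure.rnDeriv_le_one_of_le hτle
    exact (Measure.ae_ennreal_smul_measure_iff hκ0).1 this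
  have h2 : τ'.rnDeriv (κ • μ') =ᵐ[μ'] κ⁻¹ • τ'.rnDeriv μ' :=
    Measure.rnDeriv_smul_right_of_ne_top τ' μ' hκ0 hκtop
  have hDle : τ'.rnDeriv μ' ≤ᵐ[μ'] fun _ => κ := by
    filter_upwards [h1, h2] with y hy1 hy2
    have hinv : κ⁻¹ * τ'.rnDeriv μ' y ≤ 1 := by
      have : (κ⁻¹ • τ'.rnDeriv μ') y = κ⁻¹ * τ'.rnDeriv μ' y := rfl
      rw [← this, ← hy2]
      exact hy1
    calc τ'.rnDeriv μ' y = κ * (κ⁻¹ * τ'.rnDeriv μ' y) := by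
          rw [← mul_assoc, ENNReal.mul_inv_cancel hκ0 hκtop, one_mul]
      _ ≤ κ * 1 := mul_le_mul_right hinv _
      _ = κ := mul_one κ
  set D' : (Fin (n+m) → ℝ) → ℝ≥0∞ := fun y => min (τ'.rnDeriv μ' y) κ with hD'
  have hD'meas : Measurable D' := (Measure.measurable_rnDeriv τ' μ').min measurable_const
  have hD'netop : ∀ y, D' y ≠ ∞ := fun y => ((min_le_right _ _).trans_lt hκtop.lt_top).ne
  have hwd : μ'.withDensity D' = τ' := by
    have hae : D' =ᵐ[μ'] τ'.rnDeriv μ' := by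
      filter_upwards [hDle] with y hy
      exact min_eq_left hy
    rw [withDensity_congr_ae hae]
    exact Measure.withDensity_rnDeriv_eq τ' μ' hac
  set g1 : (Fin (n+m) → ℝ) → ℂ := fun y => if ‖g (e.symm y)‖ = 1 then g (e.symm y) else 1
    with hg1
  have hgsm : Measurable (fun y => g (e.symm y)) := hgm.comp e.symm.measurable
  have hsetm : MeasurableSet {y : Fin (n+m) → ℝ | ‖g (e.symm y)‖ = 1} := by
    have : Measurable fun y => ‖g (e.symm y)‖ := hgsm.norm
    exact this (measurableSet_singleton 1)
  have hg1m : Measurable g1 := Measurable.ite hsetm hgsm measurable_const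
  have hg1norm : ∀ y, ‖g1 y‖ = 1 := by
    intro y
    by_cases h : ‖g (e.symm y)‖ = 1
    · simp only [hg1, if_pos h]; exact h
    · simp only [hg1, if_neg h]; exact norm_one
  set fP : (Fin (n+m) → ℝ) → ℂ := fun y => (D' y).toReal • g1 y with hfPdef
  have hfPm : Measurable fP := (hD'meas.ennreal_toReal).smul hg1m
  have hfPnorm : ∀ y, ‖fP y‖ = (D' y).toReal := by
    intro y
    rw [hfPdef]
    simp only [norm_smul, Real.norm_eq_abs, hg1norm, mul_one]
    exact abs_of_nonneg ENNReal.toReal_nonneg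
  have hfPint : Integrable fP μ' := by
    refine ⟨hfPm.aestronglyMeasurable, ?_⟩
    rw [hasFiniteIntegral_iff_norm]
    calc ∫⁻ y, ENNReal.ofReal ‖fP y‖ ∂μ' ≤ ∫⁻ y, τ'.rnDeriv μ' y ∂μ' := by
          apply lintegral_mono
          intro y
          show ENNReal.ofReal ‖fP y‖ ≤ τ'.rnDeriv μ' y
          rw [hfPnorm y, ENNReal.ofReal_toReal (hD'netop y)]
          exact min_le_left _ _
      _ < ∞ := Measure.lintegral_rnDeriv_lt_top τ' μ'
  -- the cube/ball dictionary
  have hcube : ∀ (z : Fin (n+m) → ℝ) (t : ℝ), 0 ≤ t →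
      cube (n+m) (e.symm z) (2*t) = ⇑e ⁻¹' closedBall z t := by
    intro z t ht
    have h2 := cube_eq_preimage (e.symm z) (by linarith : (0:ℝ) ≤ 2*t)
    rw [← he] at h2
    have h1 : (2*t)/2 = t := by ring
    rw [h2, MeasurableEquiv.apply_symm_apply, h1]
  have hσcube : ∀ (z : Fin (n+m) → ℝ) (t : ℝ), 0 ≤ t →
      σ (cube (n+m) (e.symm z) (2*t)) = σ' (closedBall z t) := by
    intro z t ht
    rw [hcube z t ht, hσ', Measure.map_apply e.measurable measurableSet_closedBall]
  have hμcube : ∀ (z : Fin (n+m) → ℝ) (t : ℝ), 0 ≤ t →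
      μ (cube (n+m) (e.symm z) (2*t)) = μ' (closedBall z t) := by
    intro z t ht
    rw [hcube z t ht, hμ', Measure.map_apply e.measurable measurableSet_closedBall]
  -- assemble
  refine ⟨(N : ℝ≥0∞), by simp, (i : Fin N) × ↥(sfam i), inferInstance,
    fun p => e.symm ((p.2 : ↥E') : Fin (n+m) → ℝ), fun p => 2 * rad (p.2 : ↥E'),
    fun x => fP (e x), ?_, ?_, ?_, ?_, ?_, ?_, ?_⟩
  · intro j
    have := hrad0 (j.2 : ↥E')
    show (0:ℝ) < 2 * rad (j.2 : ↥E')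
    linarith
  · -- bounded overlap
    intro x
    have hterm : ∀ p : (i : Fin N) × ↥(sfam i),
        (cube (n+m) (e.symm ((p.2 : ↥E') : Fin (n+m) → ℝ)) (2 * rad (p.2 : ↥E'))).indicator
          (fun _ => (1:ℝ≥0∞)) x
        = (closedBall ((p.2 : ↥E') : Fin (n+m) → ℝ) (rad (p.2 : ↥E'))).indicator
          (fun _ => (1:ℝ≥0∞)) (e x) := by
      intro p
      rw [Set.indicator_apply, Set.indicator_apply]
      congr 1
      rw [hcube _ _ (hrad0 _).le]
      simp [mem_preimage]
    calc ∑' p : (i : Fin N) × ↥(sfam i), (cube (n+m) (e.symm ((p.2 : ↥E') : Fin (n+m) → ℝ))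
          (2 * rad (p.2 : ↥E'))).indicator (fun _ => (1:ℝ≥0∞)) x
        = ∑' p : (i : Fin N) × ↥(sfam i), (closedBall ((p.2 : ↥E') : Fin (n+m) → ℝ)
            (rad (p.2 : ↥E'))).indicator (fun _ => (1:ℝ≥0∞)) (e x) := by
          exact tsum_congr hterm
      _ = ∑ i : Fin N, ∑' j : ↥(sfam i), (closedBall ((j : ↥E') : Fin (n+m) → ℝ)
            (rad (j : ↥E'))).indicator (fun _ => (1:ℝ≥0∞)) (e x) := by
          rw [ENNReal.tsum_sigma']
          exact tsum_fintype _
      _ ≤ ∑ i : Fin N, 1 := by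
          apply Finset.sum_le_sum
          intro i _
          by_cases hex : ∃ j : ↥(sfam i), (e x) ∈ closedBall ((j : ↥E') : Fin (n+m) → ℝ)
            (rad (j : ↥E'))
          · obtain ⟨j₀, hj₀⟩ := hex
            have hz : ∀ j : ↥(sfam i), j ≠ j₀ →
                (closedBall ((j : ↥E') : Fin (n+m) → ℝ) (rad (j : ↥E'))).indicator
                  (fun _ => (1:ℝ≥0∞)) (e x) = 0 := by
              intro j hne
              rw [Set.indicator_apply_eq_zero]
              intro hmem
              exfalso
              have hd := hdisj i j.2 j₀.2 (fun hval => hne (Subtype.ext hval))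
              exact Set.disjoint_left.1 hd hmem hj₀
            rw [tsum_eq_single j₀ hz, Set.indicator_apply]
            split_ifs <;> simp
          · push_neg at hex
            have : ∀ j : ↥(sfam i), (closedBall ((j : ↥E') : Fin (n+m) → ℝ)
                (rad (j : ↥E'))).indicator (fun _ => (1:ℝ≥0∞)) (e x) = 0 := by
              intro j
              rw [Set.indicator_apply_eq_zero]
              intro hmem
              exact absurd hmem (hex j)
            rw [tsum_congr this]
            simp
      _ = (N : ℝ≥0∞) := by simp
  · -- integrability
    exact (e.measurableEmbedding.integrable_map_iff).1 hfPint
  · -- property (i)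
    intro j
    have h1 := hσcube ((j.2 : ↥E') : Fin (n+m) → ℝ) (rad (j.2 : ↥E')) (hrad0 _).le
    have h2 := hμcube ((j.2 : ↥E') : Fin (n+m) → ℝ) (2 * rad (j.2 : ↥E'))
      (by linarith [hrad0 (j.2 : ↥E')])
    rw [show (2 : ℝ) * (2 * rad (j.2 : ↥E')) = 2 * (2 * rad (j.2 : ↥E')) from rfl] at h2
    rw [h1, h2]
    exact hradlt _
  · -- property (ii)
    intro j η hη
    have hrp := hrad0 (j.2 : ↥E')
    have h1 : η * (2 * rad (j.2 : ↥E')) = 2 * (η * rad (j.2 : ↥E')) := by ring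
    have h2 : 2 * η * (2 * rad (j.2 : ↥E')) = 2 * (2 * (η * rad (j.2 : ↥E'))) := by ring
    rw [h1, h2, hσcube _ _ (by nlinarith), hμcube _ _ (by nlinarith)]
    exact hradeta _ η hη
  · -- sup-norm bound
    apply ae_of_all
    intro x
    have : ‖fP (e x)‖ = (D' (e x)).toReal := hfPnorm _
    rw [this]
    calc (D' (e x)).toReal ≤ κ.toReal := ENNReal.toReal_mono hκtop (min_le_right _ _)
      _ = lam := ENNReal.toReal_ofReal hlam0.le
  · -- the representation outside Ω
    intro s hs hsub
    set s' := ⇑e.symm ⁻¹' s with hs'def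
    have hs'm : MeasurableSet s' := e.symm.measurable hs
    have hpre : ⇑e ⁻¹' s' = s := by
      ext x
      simp [hs'def]
    have hsE : s' ⊆ E'ᶜ := by
      intro z hz hzE
      have hzrange : z ∈ range q.c := ⟨⟨z, hzE⟩, rfl⟩
      have hzcov := hcov hzrange
      simp only [mem_iUnion] at hzcov
      obtain ⟨i, j, hj, hzball⟩ := hzcov
      have hmem : e.symm z ∈ cube (n+m) (e.symm ((j : ↥E') : Fin (n+m) → ℝ)) (2 * rad j) := by
        rw [hcube _ _ (hrad0 j).le]
        simp only [mem_preimage, MeasurableEquiv.apply_symm_apply]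
        exact ball_subset_closedBall hzball
      refine hsub hz (mem_iUnion.2 ⟨⟨i, ⟨j, hj⟩⟩, ?_⟩)
      exact hmem
    have hres : τ'.restrict s' = σ'.restrict s' := by
      rw [hτdef, Measure.restrict_restrict hs'm, inter_eq_self_of_subset_left hsE]
    have hgae : (fun z => g (e.symm z)) =ᵐ[τ'.restrict s'] g1 := by
      have hmap : ∀ᵐ z ∂σ', ‖g (e.symm z)‖ = 1 := by
        rw [hσ', ae_map_iff e.measurable.aemeasurable hsetm]
        filter_upwards [hg] with x hx
        simpa using hx
      have hacc : τ'.restrict s' ≪ σ' := by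
        refine (Measure.absolutelyContinuous_of_le Measure.restrict_le_self).trans ?_
        rw [hτdef]
        exact Measure.absolutelyContinuous_of_le Measure.restrict_le_self
      filter_upwards [hacc.ae_le hmap] with z hz1
      rw [hg1]
      simp [hz1]
    calc ∫ y in s, g y ∂σ
        = ∫ z in s', g (e.symm z) ∂σ' := by
          rw [hσ', e.measurableEmbedding.setIntegral_map (fun z => g (e.symm z)) s', hpre]
          simp only [MeasurableEquiv.symm_apply_apply]
      _ = ∫ z in s', g (e.symm z) ∂τ' := by rw [← hres]
      _ = ∫ z in s', g1 z ∂τ' := integral_congr_ae hgae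
      _ = ∫ z in s', fP z ∂μ' := by
          rw [← hwd, restrict_withDensity hs'm]
          have hDN : Measurable fun z => (D' z).toNNReal := hD'meas.ennreal_toNNReal
          have hwd2 : (μ'.restrict s').withDensity D'
              = (μ'.restrict s').withDensity (fun z => ((D' z).toNNReal : ℝ≥0∞)) := by
            apply withDensity_congr_ae
            apply ae_of_all
            intro z
            exact (ENNReal.coe_toNNReal (hD'netop z)).symm
          rw [hwd2, integral_withDensity_eq_integral_smul hDN]
          apply integral_congr_ae
          apply ae_of_all
          intro z
          show ((D' z).toNNReal : ℝ≥0) • g1 z = fP z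
          rw [hfPdef, NNReal.smul_def]
          rfl
      _ = ∫ y in s, fP (e y) ∂μ := by
          rw [hμ', e.measurableEmbedding.setIntegral_map fP s', hpre]
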